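/- Let F be a finite field, S an F-vector space, and (U, V) a tiling of S such that U is projective. Suppose u_1, …, u_N are nonzero vectors of S, no two of which are proportional, such that U = ⋃_{i=1}^N F·u_i. Define the linear map h : F^N → S by h(c) = Σ_{i=1}^N c_i u_i and set C = h^{-1}(V). Let W = span(U), r = dim W, and V_U = V ∩ W. Then dim(ker(C)) = dim(ker(V_U)) + N − r, and |per(C)| = |per(V_U)| · |F|^{N − r}. -/

import Mathlib

/-- `(U, V)` is a tiling of the ambient space `S`: every element of `S` is uniquely
represented as the sum of an element of `U` and an element of `V`. -/
def IsTiling {S : Type*} [AddCommGroup S] (U V : Set S) : Prop :=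
  ∀ s : S, ∃! p : S × S, p.1 ∈ U ∧ p.2 ∈ V ∧ p.1 + p.2 = s

/-- `U` is projective: `F·U = U`, i.e. `U` is closed under scalar multiplication. -/
def IsProjective (F : Type*) {S : Type*} [Field F] [AddCommGroup S] [Module F S]
    (U : Set S) : Prop :=
  ∀ (a : F) ⦃u : S⦄, u ∈ U → a • u ∈ U

/-- The set of periods of `X`: vectors `w` with `X + w = X`. -/
def periods {S : Type*} [AddCommGroup S] (X : Set S) : Set S :=
  {w | (fun v => v + w) '' X = X}

/-- The kernel of `X` (as a set): vectors all of whose scalar multiples are periods of `X`.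
This is the maximal `F`-subspace contained in `periods X`. -/
def kerSet (F : Type*) {S : Type*} [Field F] [AddCommGroup S] [Module F S]
    (X : Set S) : Set S :=
  {w | ∀ a : F, a • w ∈ periods X}

/-- The dimension of the kernel of `X` (the kernel set is a subspace, so spanning it
does not change it). -/
noncomputable def kerDim (F : Type*) {S : Type*} [Field F] [AddCommGroup S] [Module F S]
    (X : Set S) : ℕ :=
  Module.finrank F (Submodule.span F (kerSet F X))

section Aux

variable {F : Type*} [Field F] {S : Type*} [AddCommGroup S] [Module F S]

lemma mem_periods_iff {X : Set S} {w : S} : w ∈ periods X ↔ ∀ x, x ∈ X ↔ x + w ∈ X := by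
  constructor
  · intro h x
    refine ⟨fun hx => ?_, fun hx => ?_⟩
    · rw [show X = (fun v => v + w) '' X from h.symm]
      exact ⟨x, hx, rfl⟩
    · rw [show X = (fun v => v + w) '' X from h.symm] at hx
      obtain ⟨y, hy, hyx⟩ := hx
      rw [add_left_inj] at hyx
      exact hyx ▸ hy
  · intro h
    ext y
    simp only [Set.mem_image]
    constructor
    · rintro ⟨x, hx, rfl⟩
      exact (h x).1 hx
    · intro hy
      exact ⟨y - w, (h (y - w)).2 (by simpa using hy), by abel⟩

lemma zero_mem_periods (X : Set S) : (0 : S) ∈ periods X := by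
  rw [mem_periods_iff]
  simp

lemma add_mem_periods {X : Set S} {w1 w2 : S} (h1 : w1 ∈ periods X) (h2 : w2 ∈ periods X) :
    w1 + w2 ∈ periods X := by
  rw [mem_periods_iff] at *
  intro x
  rw [← add_assoc]
  exact (h1 x).trans (h2 (x + w1))

def kerSubmodule (F : Type*) {S : Type*} [Field F] [AddCommGroup S] [Module F S] (X : Set S) :
    Submodule F S where
  carrier := kerSet F X
  add_mem' := fun {w1 w2} h1 h2 a => by
    rw [smul_add]; exact add_mem_periods (h1 a) (h2 a)
  zero_mem' := fun a => by rw [smul_zero]; exact zero_mem_periods X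
  smul_mem' := fun b w hw a => by rw [smul_smul]; exact hw (a * b)

lemma kerDim_eq_finrank (X : Set S) : kerDim F X = Module.finrank F (kerSubmodule F X) := by
  rw [kerDim, show kerSet F X = ↑(kerSubmodule F X) from rfl, Submodule.span_eq]

end Aux

set_option synthInstance.maxHeartbeats 1000000 in
set_option maxHeartbeats 1000000 in
lemma main_aux {F : Type*} [Field F] [Fintype F] {S : Type*} [AddCommGroup S] [Module F S]
    {N : ℕ} (h : (Fin N → F) →ₗ[F] S) (V : Set S)
    (hne : (V ∩ (LinearMap.range h : Set S)).Nonempty) :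
    kerDim F (h ⁻¹' V) = kerDim F (V ∩ (LinearMap.range h : Set S))
        + (N - Module.finrank F (LinearMap.range h)) ∧
      Nat.card (periods (h ⁻¹' V)) = Nat.card (periods (V ∩ (LinearMap.range h : Set S)))
        * Fintype.card F ^ (N - Module.finrank F (LinearMap.range h)) := by
  classical
  set W := LinearMap.range h with hWdef
  set VU := V ∩ (W : Set S) with hVUdef
  set C := h ⁻¹' V with hCdef
  have hperW : periods VU ⊆ (W : Set S) := by
    intro w hw
    obtain ⟨v, hv⟩ := hne
    rw [mem_periods_iff] at hw
    have hvw : v + w ∈ VU := (hw v).1 hv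
    have h2 : (v + w) - v ∈ W := W.sub_mem hvw.2 hv.2
    simpa using h2
  have hperC : periods C = h ⁻¹' (periods VU) := by
    ext w
    simp only [Set.mem_preimage]
    rw [mem_periods_iff, mem_periods_iff]
    constructor
    · intro H s
      constructor
      · rintro ⟨hsV, hsW⟩
        obtain ⟨c, rfl⟩ := hsW
        refine ⟨?_, W.add_mem (LinearMap.mem_range_self h c) (LinearMap.mem_range_self h w)⟩
        have hc : c + w ∈ C := (H c).1 hsV
        rw [hCdef, Set.mem_preimage, map_add] at hc
        exact hc
      · rintro ⟨hsV, hsW⟩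
        have hwW : h w ∈ W := LinearMap.mem_range_self h w
        have hsW' : s ∈ W := by
          have := W.sub_mem hsW hwW
          simpa using this
        obtain ⟨c, rfl⟩ := hsW'
        have hc : c + w ∈ C := by
          rw [hCdef, Set.mem_preimage, map_add]
          exact hsV
        exact ⟨(H c).2 hc, LinearMap.mem_range_self h c⟩
    · intro H c
      constructor
      · intro hc
        have h1 : h c ∈ VU := ⟨hc, LinearMap.mem_range_self h c⟩
        have h2 := (H (h c)).1 h1
        rw [hCdef, Set.mem_preimage, map_add]
        exact h2.1
      · intro hc
        rw [hCdef, Set.mem_preimage, map_add] at hc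
        have h1 : h c + h w ∈ VU :=
          ⟨hc, W.add_mem (LinearMap.mem_range_self h c) (LinearMap.mem_range_self h w)⟩
        exact ((H (h c)).2 h1).1
  have hkerC : kerSubmodule F C = (kerSubmodule F VU).comap h := by
    ext w
    rw [Submodule.mem_comap]
    show (∀ a : F, a • w ∈ periods C) ↔ ∀ a : F, a • (h w) ∈ periods VU
    constructor
    · intro hw a
      have := hw a
      rw [hperC, Set.mem_preimage, map_smul] at this
      exact this
    · intro hw a
      rw [hperC, Set.mem_preimage, map_smul]
      exact hw a
  have hkerle : kerSubmodule F VU ≤ W := by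
    intro w hw
    have h1 : (1 : F) • w ∈ periods VU := hw 1
    rw [one_smul] at h1
    exact hperW h1
  have hrank : Module.finrank F W + Module.finrank F (LinearMap.ker h) = N := by
    have h0 := LinearMap.finrank_range_add_finrank_ker h
    rw [Module.finrank_pi, Fintype.card_fin] at h0
    exact h0
  have hcomap : ∀ p : Submodule F S, p ≤ W →
      Module.finrank F (p.comap h) = Module.finrank F p + (N - Module.finrank F W) := by
    intro p hp
    have h1 := LinearMap.finrank_range_add_finrank_ker (h.domRestrict (p.comap h))
    rw [LinearMap.range_domRestrict, Submodule.map_comap_eq, inf_eq_right.mpr hp,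
      LinearMap.ker_domRestrict] at h1
    have hle : LinearMap.ker h ≤ p.comap h := by
      intro x hx
      rw [Submodule.mem_comap, LinearMap.mem_ker.mp hx]
      exact p.zero_mem
    have h2 : Module.finrank F (Submodule.comap (p.comap h).subtype (LinearMap.ker h))
        = Module.finrank F (LinearMap.ker h) :=
      LinearEquiv.finrank_eq (Submodule.comapSubtypeEquivOfLe hle)
    rw [h2] at h1
    omega
  refine ⟨?_, ?_⟩
  · rw [kerDim_eq_finrank, kerDim_eq_finrank, hkerC, hcomap _ hkerle]
  · -- cardinality
    have hsurj : Function.Surjective h.rangeRestrict := h.surjective_rangeRestrict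
    obtain ⟨g, hg⟩ :=
      h.rangeRestrict.exists_rightInverse_of_surjective (LinearMap.range_eq_top.mpr hsurj)
    have hgh : ∀ x : W, h (g x) = ↑x := by
      intro x
      have h1 : h.rangeRestrict (g x) = x := by
        rw [← LinearMap.comp_apply, hg, LinearMap.id_apply]
      exact congrArg Subtype.val h1
    have hcard : ∀ A : Set S, A ⊆ (W : Set S) →
        Nat.card (h ⁻¹' A) = Nat.card A * Nat.card (LinearMap.ker h) := by
      intro A hA
      have e : (h ⁻¹' A) ≃ A × (LinearMap.ker h) := by
        refine ⟨fun c => (⟨h ↑c, c.2⟩, ⟨↑c - g ⟨h ↑c, LinearMap.mem_range_self h ↑c⟩, ?_⟩),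
          fun p => ⟨g ⟨↑p.1, hA p.1.2⟩ + ↑p.2, ?_⟩, ?_, ?_⟩
        · rw [LinearMap.mem_ker, map_sub, hgh, sub_self]
        · show h _ ∈ A
          rw [map_add, hgh, LinearMap.mem_ker.mp p.2.2, add_zero]
          exact p.1.2
        · intro c
          apply Subtype.ext
          show g ⟨h ↑c, _⟩ + (↑c - g ⟨h ↑c, _⟩) = ↑c
          abel
        · rintro ⟨⟨a, ha⟩, ⟨k, hk⟩⟩
          have hk0 : h k = 0 := hk
          have hval : h (g ⟨a, hA ha⟩ + k) = a := by rw [map_add, hgh, hk0, add_zero]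
          have e1 : (⟨h (g ⟨a, hA ha⟩ + k),
              LinearMap.mem_range_self h (g ⟨a, hA ha⟩ + k)⟩ : W) = ⟨a, hA ha⟩ :=
            Subtype.ext hval
          refine Prod.ext (Subtype.ext hval) (Subtype.ext ?_)
          show g ⟨a, hA ha⟩ + k - g _ = k
          rw [e1]
          abel
      rw [Nat.card_congr e, Nat.card_prod]
    have hcardker : Nat.card (LinearMap.ker h) = Fintype.card F ^ (N - Module.finrank F W) := by
      haveI : Fintype (LinearMap.ker h) := Fintype.ofFinite _
      rw [Nat.card_eq_fintype_card, Module.card_eq_pow_finrank (K := F)]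
      congr 1
      omega
    rw [hperC, hcard _ hperW, hcardker]

theorem statement2 {F : Type*} [Field F] [Fintype F] {S : Type*} [AddCommGroup S] [Module F S]
    (U V : Set S) (hT : IsTiling U V) (hproj : IsProjective F U)
    {N : ℕ} (u : Fin N → S) (hu0 : ∀ i, u i ≠ 0)
    (hcol : ∀ i j : Fin N, i ≠ j → ∀ a : F, u i ≠ a • u j)
    (hU : U = ⋃ i, Set.range (fun a : F => a • u i))
    (C : Set (Fin N → F)) (hC : C = {c | (∑ i, c i • u i) ∈ V})
    (W : Submodule F S) (hW : W = Submodule.span F U)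
    (r : ℕ) (hr : r = Module.finrank F W)
    (VU : Set S) (hVU : VU = V ∩ (W : Set S)) :
    kerDim F C = kerDim F VU + (N - r) ∧
      Nat.card (periods C) = Nat.card (periods VU) * Fintype.card F ^ (N - r) := by
  classical
  set h : (Fin N → F) →ₗ[F] S := Fintype.linearCombination F u with hh
  have hrange : LinearMap.range h = W := by
    rw [hh, Fintype.range_linearCombination, hW]
    apply le_antisymm
    · rw [Submodule.span_le]
      rintro _ ⟨i, rfl⟩
      apply Submodule.subset_span
      rw [hU]
      exact Set.mem_iUnion.mpr ⟨i, ⟨1, one_smul F (u i)⟩⟩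
    · rw [Submodule.span_le]
      intro x hx
      rw [hU] at hx
      simp only [Set.mem_iUnion, Set.mem_range] at hx
      obtain ⟨i, a, rfl⟩ := hx
      exact Submodule.smul_mem _ a (Submodule.subset_span (Set.mem_range_self i))
  have hCeq : C = h ⁻¹' V := by
    rw [hC]
    rfl
  have hne : (V ∩ (LinearMap.range h : Set S)).Nonempty := by
    obtain ⟨⟨u0, v0⟩, ⟨hu0', hv0', hsum⟩, -⟩ := hT 0
    refine ⟨v0, hv0', ?_⟩
    have hu0W : u0 ∈ LinearMap.range h := by
      rw [hrange, hW]
      exact Submodule.subset_span hu0'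
    have hv0e : v0 = -u0 := eq_neg_of_add_eq_zero_right hsum
    rw [hv0e]
    exact (LinearMap.range h).neg_mem hu0W
  obtain ⟨d1, c1⟩ := main_aux h V hne
  rw [hrange] at d1 c1
  rw [hCeq, hVU, hr]
  exact ⟨d1, c1⟩
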